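/- Let e_1,...,e_m be positive integers with even sum T = Σ e_i. Consider the n-item-set instance with goods e_1,...,e_m, additional n−2 goods each of value 1/4, and two chores each of value −T/2 + 1/4. If the Partition instance has a solution, then the n-agent maximin share of this instance equals 1/4. -/

import Mathlib

open Finset
open scoped Classical

/-- `A` is a partition of the item set `M` into `n` (possibly empty) bundles. -/
def IsPartition {ι : Type*} [DecidableEq ι] (M : Finset ι) (n : ℕ)
    (A : Fin n → Finset ι) : Prop :=
  (∀ k, A k ⊆ M) ∧ (∀ k l, k ≠ l → Disjoint (A k) (A l)) ∧ (∀ j ∈ M, ∃ k, j ∈ A k)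

/-- `μ` is the maximin share of the additive valuation `v` over `M` with `n` bundles:
some partition attains minimum bundle value at least `μ`, and every partition has a
bundle of value at most `μ`. -/
def IsMMS {ι : Type*} [DecidableEq ι] (v : ι → ℝ) (M : Finset ι) (n : ℕ) (μ : ℝ) : Prop :=
  (∃ A : Fin n → Finset ι, IsPartition M n A ∧ ∀ k, μ ≤ ∑ j ∈ A k, v j) ∧
  (∀ A : Fin n → Finset ι, IsPartition M n A → ∃ k, ∑ j ∈ A k, v j ≤ μ)

/-- Embedding of the first `m` items into `Fin (m + n)`. -/
def emb (m n : ℕ) : Fin m ↪ Fin (m + n) :=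
  Fin.castLEEmb (Nat.le_add_right m n)

/-- The explicit partition witnessing the lower bound. -/
def bundles (m n : ℕ) (S : Finset (Fin m)) (hn : 2 ≤ n) : Fin n → Finset (Fin (m + n)) :=
  fun k =>
    if (k : ℕ) = 0 then S.map (emb m n) ∪ {⟨m + n - 2, by omega⟩}
    else if (k : ℕ) = 1 then Sᶜ.map (emb m n) ∪ {⟨m + n - 1, by omega⟩}
    else {⟨m + (k : ℕ) - 2, by have := k.2; omega⟩}

lemma bundles_zero (m n : ℕ) (S : Finset (Fin m)) (hn : 2 ≤ n) (k : Fin n)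
    (hk : (k : ℕ) = 0) :
    bundles m n S hn k = S.map (emb m n) ∪ {⟨m + n - 2, by omega⟩} := by
  simp only [bundles]
  rw [if_pos hk]

lemma bundles_one (m n : ℕ) (S : Finset (Fin m)) (hn : 2 ≤ n) (k : Fin n)
    (hk : (k : ℕ) = 1) :
    bundles m n S hn k = Sᶜ.map (emb m n) ∪ {⟨m + n - 1, by omega⟩} := by
  simp only [bundles]
  rw [if_neg (show ¬ (k : ℕ) = 0 by omega), if_pos hk]

lemma bundles_big (m n : ℕ) (S : Finset (Fin m)) (hn : 2 ≤ n) (k : Fin n)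
    (hk : 2 ≤ (k : ℕ)) :
    bundles m n S hn k = {⟨m + (k : ℕ) - 2, by have := k.2; omega⟩} := by
  simp only [bundles]
  rw [if_neg (show ¬ (k : ℕ) = 0 by omega), if_neg (show ¬ (k : ℕ) = 1 by omega)]

lemma mem_map_emb (m n : ℕ) (s : Finset (Fin m)) (j : Fin (m + n)) :
    j ∈ s.map (emb m n) ↔ ∃ h : (j : ℕ) < m, (⟨(j : ℕ), h⟩ : Fin m) ∈ s := by
  constructor
  · intro hj
    obtain ⟨i, hi, rfl⟩ := Finset.mem_map.mp hj
    exact ⟨i.2, hi⟩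
  · rintro ⟨h, hmem⟩
    exact Finset.mem_map.mpr ⟨⟨(j : ℕ), h⟩, hmem, rfl⟩

lemma mem_bundles (m n : ℕ) (S : Finset (Fin m)) (hn : 2 ≤ n) (k : Fin n)
    (j : Fin (m + n)) (hj : j ∈ bundles m n S hn k) :
    ((k : ℕ) = 0 ∧ ((∃ h : (j : ℕ) < m, (⟨(j : ℕ), h⟩ : Fin m) ∈ S) ∨ (j : ℕ) = m + n - 2)) ∨
    ((k : ℕ) = 1 ∧ ((∃ h : (j : ℕ) < m, (⟨(j : ℕ), h⟩ : Fin m) ∉ S) ∨ (j : ℕ) = m + n - 1)) ∨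
    (2 ≤ (k : ℕ) ∧ (j : ℕ) = m + (k : ℕ) - 2) := by
  by_cases hk0 : (k : ℕ) = 0
  · rw [bundles_zero m n S hn k hk0] at hj
    refine Or.inl ⟨hk0, ?_⟩
    rcases Finset.mem_union.mp hj with h | h
    · exact Or.inl ((mem_map_emb m n S j).mp h)
    · exact Or.inr (congrArg Fin.val (Finset.mem_singleton.mp h))
  · by_cases hk1 : (k : ℕ) = 1
    · rw [bundles_one m n S hn k hk1] at hj
      refine Or.inr (Or.inl ⟨hk1, ?_⟩)
      rcases Finset.mem_union.mp hj with h | h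
      · obtain ⟨h1, h2⟩ := (mem_map_emb m n Sᶜ j).mp h
        exact Or.inl ⟨h1, Finset.mem_compl.mp h2⟩
      · exact Or.inr (congrArg Fin.val (Finset.mem_singleton.mp h))
    · rw [bundles_big m n S hn k (by omega)] at hj
      exact Or.inr (Or.inr ⟨by omega, congrArg Fin.val (Finset.mem_singleton.mp hj)⟩)

/-- `n`-agent hard instance: goods `e_1,...,e_m` (positive integers with even sum `T`),
`n-2` extra goods of value `1/4`, and two chores each of value `-T/2 + 1/4`. If the Partition
instance has a solution, then the `n`-agent maximin share of this instance equals
`1/4`. -/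
theorem partition_implies_mms_eq_quarter (m n : ℕ) (hn : 2 ≤ n) (e : Fin m → ℕ)
    (hpos : ∀ i, 0 < e i) (S : Finset (Fin m))
    (hS : 2 * ∑ i ∈ S, e i = ∑ i, e i) :
    IsMMS
      (fun j : Fin (m + n) =>
        if h : (j : ℕ) < m then (e ⟨j, h⟩ : ℝ)
        else if (j : ℕ) < m + n - 2 then 1 / 4
        else -((∑ i, e i : ℕ) : ℝ) / 2 + 1 / 4)
      Finset.univ n (1 / 4) := by
  classical
  set v : Fin (m + n) → ℝ := fun j : Fin (m + n) =>
        if h : (j : ℕ) < m then (e ⟨j, h⟩ : ℝ)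
        else if (j : ℕ) < m + n - 2 then 1 / 4
        else -((∑ i, e i : ℕ) : ℝ) / 2 + 1 / 4 with hvdef
  have hvv : ∀ (a : ℕ) (ha : a < m + n),
      v ⟨a, ha⟩ = if h : a < m then (e ⟨a, h⟩ : ℝ)
        else if a < m + n - 2 then 1 / 4
        else -((∑ i, e i : ℕ) : ℝ) / 2 + 1 / 4 := fun a ha => rfl
  have hve : ∀ i : Fin m, v (emb m n i) = (e i : ℝ) := by
    intro i
    rw [show (emb m n i)
        = (⟨(i : ℕ), Nat.lt_of_lt_of_le i.2 (Nat.le_add_right m n)⟩ : Fin (m + n)) from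
        Fin.ext rfl,
      hvv, dif_pos i.2]
  have hvchore : ∀ (a : ℕ) (ha : a < m + n), ¬ a < m + n - 2 →
      v ⟨a, ha⟩ = -((∑ i, e i : ℕ) : ℝ) / 2 + 1 / 4 := by
    intro a ha h2
    rw [hvv, dif_neg (by omega), if_neg h2]
  have hvmid : ∀ (a : ℕ) (ha : a < m + n), ¬ a < m → a < m + n - 2 →
      v ⟨a, ha⟩ = 1 / 4 := by
    intro a ha h1 h2
    rw [hvv, dif_neg h1, if_pos h2]
  have hT2 : ((∑ i ∈ S, e i : ℕ) : ℝ) = ((∑ i, e i : ℕ) : ℝ) / 2 := by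
    have h2 : (2 : ℝ) * ((∑ i ∈ S, e i : ℕ) : ℝ) = ((∑ i, e i : ℕ) : ℝ) := by
      exact_mod_cast hS
    linarith
  have hTc : ((∑ i ∈ Sᶜ, e i : ℕ) : ℝ) = ((∑ i, e i : ℕ) : ℝ) / 2 := by
    have hadd : ((∑ i ∈ S, e i : ℕ) : ℝ) + ((∑ i ∈ Sᶜ, e i : ℕ) : ℝ)
        = ((∑ i, e i : ℕ) : ℝ) := by
      exact_mod_cast congrArg (Nat.cast (R := ℝ)) (Finset.sum_add_sum_compl S e)
    linarith
  constructor
  · -- lower bound: the explicit partition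
    refine ⟨bundles m n S hn, ⟨fun k => Finset.subset_univ _, ?_, ?_⟩, ?_⟩
    · -- disjointness
      intro k l hkl
      rw [Finset.disjoint_left]
      intro j hjk hjl
      have h1 := mem_bundles m n S hn k j hjk
      have h2 := mem_bundles m n S hn l j hjl
      have hkl' : (k : ℕ) ≠ (l : ℕ) := fun h => hkl (Fin.ext h)
      have hkn := k.2
      have hln := l.2
      rcases h1 with ⟨hk, hj1⟩ | ⟨hk, hj1⟩ | ⟨hk, hj1⟩ <;>
        rcases h2 with ⟨hl, hj2⟩ | ⟨hl, hj2⟩ | ⟨hl, hj2⟩ <;>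
        try omega
      all_goals
        first
        | (rcases hj1 with ⟨ha, hb⟩ | hj1 <;> rcases hj2 with ⟨hc, hd⟩ | hj2 <;>
            first
            | omega
            | exact hd hb
            | exact hb hd)
        | (rcases hj1 with ⟨ha, hb⟩ | hj1 <;> omega)
        | (rcases hj2 with ⟨hc, hd⟩ | hj2 <;> omega)
    · -- coverage
      intro j _
      by_cases h1 : (j : ℕ) < m
      · by_cases h2 : (⟨(j : ℕ), h1⟩ : Fin m) ∈ S
        · refine ⟨⟨0, by omega⟩, ?_⟩
          rw [bundles_zero m n S hn _ rfl]
          exact Finset.mem_union_left _ ((mem_map_emb m n S j).mpr ⟨h1, h2⟩)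
        · refine ⟨⟨1, by omega⟩, ?_⟩
          rw [bundles_one m n S hn _ rfl]
          exact Finset.mem_union_left _
            ((mem_map_emb m n Sᶜ j).mpr ⟨h1, Finset.mem_compl.mpr h2⟩)
      · by_cases h3 : (j : ℕ) < m + n - 2
        · refine ⟨⟨(j : ℕ) - m + 2, by have := j.2; omega⟩, ?_⟩
          rw [bundles_big m n S hn _ (Nat.le_add_left 2 ((j : ℕ) - m))]
          exact Finset.mem_singleton.mpr
            (Fin.ext (show (j : ℕ) = m + ((j : ℕ) - m + 2) - 2 by omega))
        · by_cases h4 : (j : ℕ) = m + n - 2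
          · refine ⟨⟨0, by omega⟩, ?_⟩
            rw [bundles_zero m n S hn _ rfl]
            exact Finset.mem_union_right _ (Finset.mem_singleton.mpr (Fin.ext h4))
          · refine ⟨⟨1, by omega⟩, ?_⟩
            rw [bundles_one m n S hn _ rfl]
            have h5 : (j : ℕ) = m + n - 1 := by have := j.2; omega
            exact Finset.mem_union_right _ (Finset.mem_singleton.mpr (Fin.ext h5))
    · -- each bundle has value at least 1/4
      intro k
      by_cases hk0 : (k : ℕ) = 0
      · have hc1 : (⟨m + n - 2, by omega⟩ : Fin (m + n)) ∉ S.map (emb m n) := by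
          intro h
          obtain ⟨hlt, -⟩ := (mem_map_emb m n S _).mp h
          have hlt' : m + n - 2 < m := hlt
          omega
        rw [bundles_zero m n S hn k hk0,
          Finset.sum_union (Finset.disjoint_singleton_right.mpr hc1),
          Finset.sum_map, Finset.sum_singleton,
          Finset.sum_congr rfl (fun i _ => hve i),
          hvchore (m + n - 2) (by omega) (by omega)]
        have hc : ∑ i ∈ S, ((e i : ℕ) : ℝ) = ((∑ i ∈ S, e i : ℕ) : ℝ) := by
          push_cast; ring
        rw [hc, hT2]
        linarith
      · by_cases hk1 : (k : ℕ) = 1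
        · have hc2 : (⟨m + n - 1, by omega⟩ : Fin (m + n)) ∉ Sᶜ.map (emb m n) := by
            intro h
            obtain ⟨hlt, -⟩ := (mem_map_emb m n Sᶜ _).mp h
            have hlt' : m + n - 1 < m := hlt
            omega
          rw [bundles_one m n S hn k hk1,
            Finset.sum_union (Finset.disjoint_singleton_right.mpr hc2),
            Finset.sum_map, Finset.sum_singleton,
            Finset.sum_congr rfl (fun i _ => hve i),
            hvchore (m + n - 1) (by omega) (by omega)]
          have hc : ∑ i ∈ Sᶜ, ((e i : ℕ) : ℝ) = ((∑ i ∈ Sᶜ, e i : ℕ) : ℝ) := by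
            push_cast; ring
          rw [hc, hTc]
          linarith
        · have hkn := k.2
          rw [bundles_big m n S hn k (by omega), Finset.sum_singleton,
            hvmid (m + (k : ℕ) - 2) (by omega) (by omega) (by omega)]
  · -- upper bound: averaging
    intro A hA
    obtain ⟨hsub, hdisj, hcov⟩ := hA
    by_contra hcon
    push_neg at hcon
    have hbi : Finset.univ.biUnion A = (Finset.univ : Finset (Fin (m + n))) := by
      apply Finset.eq_univ_iff_forall.mpr
      intro j
      obtain ⟨k, hk⟩ := hcov j (Finset.mem_univ j)
      exact Finset.mem_biUnion.mpr ⟨k, Finset.mem_univ k, hk⟩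
    have hpd : (↑(Finset.univ : Finset (Fin n)) : Set (Fin n)).PairwiseDisjoint A :=
      fun k _ l _ hkl => hdisj k l hkl
    have hsum : ∑ k : Fin n, ∑ j ∈ A k, v j = ∑ j : Fin (m + n), v j := by
      rw [← hbi, Finset.sum_biUnion hpd]
    have htotal : ∑ j : Fin (m + n), v j = (n : ℝ) / 4 := by
      rw [Fin.sum_univ_add]
      have h1 : ∑ i : Fin m, v (Fin.castAdd n i) = ((∑ i, e i : ℕ) : ℝ) := by
        push_cast
        apply Finset.sum_congr rfl
        intro i _
        rw [show (Fin.castAdd n i : Fin (m + n)) = (⟨(i : ℕ), by omega⟩ : Fin (m + n)) from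
          Fin.ext rfl, hvv, dif_pos i.2]
      have h2 : ∀ i : Fin n, v (Fin.natAdd m i) =
          if (i : ℕ) < n - 2 then (1 / 4 : ℝ)
          else -((∑ i, e i : ℕ) : ℝ) / 2 + 1 / 4 := by
        intro i
        rw [show (Fin.natAdd m i : Fin (m + n)) = (⟨m + (i : ℕ), by omega⟩ : Fin (m + n)) from
          Fin.ext rfl, hvv, dif_neg (by omega)]
        by_cases h : (i : ℕ) < n - 2
        · rw [if_pos (by omega), if_pos h]
        · rw [if_neg (by omega), if_neg h]
      rw [h1, Finset.sum_congr rfl (fun i _ => h2 i)]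
      rw [Fin.sum_univ_eq_sum_range
        (fun i => if i < n - 2 then (1 / 4 : ℝ) else -((∑ i, e i : ℕ) : ℝ) / 2 + 1 / 4)]
      set p := n - 2 with hp
      have hn2 : n = p + 2 := by omega
      rw [hn2, Finset.sum_range_succ, Finset.sum_range_succ]
      rw [if_neg (by omega), if_neg (by omega)]
      rw [Finset.sum_congr rfl (fun i hi => if_pos (Finset.mem_range.mp hi)),
        Finset.sum_const, Finset.card_range, nsmul_eq_mul]
      have hpn : ((p : ℝ) + 2) = (n : ℝ) := by exact_mod_cast hn2.symm
      field_simp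
      push_cast; linarith
    have huniv : (Finset.univ : Finset (Fin n)).Nonempty := ⟨⟨0, by omega⟩, Finset.mem_univ _⟩
    have hlt : ∑ _k : Fin n, (1 / 4 : ℝ) < ∑ k : Fin n, ∑ j ∈ A k, v j :=
      Finset.sum_lt_sum_of_nonempty huniv (fun k _ => hcon k)
    have hconst : ∑ _k : Fin n, (1 / 4 : ℝ) = (n : ℝ) / 4 := by
      rw [Finset.sum_const, Finset.card_univ, Fintype.card_fin, nsmul_eq_mul]
      ring
    rw [hconst, hsum, htotal] at hlt
    exact lt_irrefl _ hlt
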